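/- Let x_1, …, x_n ∈ ℝ^d be unit vectors, let b : ℕ → ℝ satisfy b_0 ≥ 1, b_k ≥ 1/k² for k ≥ 1, and Σ_k b_k < ∞, and suppose the matrix H with H_{ab} = Σ_k b_k (x_a·x_b)^k is positive definite. For each k ∈ ℕ let a_{k,v} ∈ ℝ (v ∈ ℕ) be coefficients and β_{k,v,1}, …, β_{k,v,k} ∈ ℝ^d be vectors, and set ã_k = Σ_{v∈ℕ} |a_{k,v}| Π_{i=1}^k ‖β_{k,v,i}‖. Suppose ã_0 < ∞ and Σ_{k≥1} k ã_k < ∞. Define y ∈ ℝⁿ by y_a = Σ_{k=0}^∞ Σ_{v∈ℕ} a_{k,v} Π_{i=1}^k (β_{k,v,i} · x_a) (absolutely convergent). Then √(yᵀ H⁻¹ y) ≤ Σ_{k≥1} k ã_k + ã_0, i.e. √(yᵀH⁻¹y) ≤ g̃′(1) + g̃(0) where g̃(t) = Σ_k ã_k t^k. -/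

import Mathlib

open Matrix
open scoped RealInnerProductSpace

/-- The `k`-th auxiliary coefficient `ãₖ = ∑_v |a_{k,v}| ∏ᵢ ‖β_{k,v,i}‖` of a
multivariate power-series family. -/
noncomputable def auxCoef (d : ℕ) (a : ℕ → ℕ → ℝ)
    (β : (k : ℕ) → ℕ → Fin k → EuclideanSpace ℝ (Fin d)) (k : ℕ) : ℝ :=
  ∑' v : ℕ, |a k v| * ∏ i : Fin k, ‖β k v i‖

/-- The elementary tensor `u 0 ⊗ ⋯ ⊗ u (k-1)` realized inside
`EuclideanSpace ℝ (Fin k → Fin d)`. -/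
noncomputable def tensAux {d k : ℕ} (u : Fin k → EuclideanSpace ℝ (Fin d)) :
    EuclideanSpace ℝ (Fin k → Fin d) :=
  WithLp.toLp 2 (fun f => ∏ i, u i (f i))

lemma inner_tensAux {d k : ℕ} (u w : Fin k → EuclideanSpace ℝ (Fin d)) :
    ⟪tensAux u, tensAux w⟫ = ∏ i, ⟪u i, w i⟫ := by
  simp only [PiLp.inner_apply, RCLike.inner_apply, conj_trivial, tensAux]
  rw [Fintype.prod_sum (fun (i : Fin k) (j : Fin d) => w i j * u i j)]
  exact Finset.sum_congr rfl fun f _ => (Finset.prod_mul_distrib).symm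

lemma norm_tensAux {d k : ℕ} (u : Fin k → EuclideanSpace ℝ (Fin d)) :
    ‖tensAux u‖ = ∏ i, ‖u i‖ := by
  have h : ‖tensAux u‖ ^ 2 = (∏ i, ‖u i‖) ^ 2 := by
    rw [← real_inner_self_eq_norm_sq, inner_tensAux, ← Finset.prod_pow]
    exact Finset.prod_congr rfl fun i _ => real_inner_self_eq_norm_sq _
  have h1 : ‖tensAux u‖ = Real.sqrt (‖tensAux u‖ ^ 2) := (Real.sqrt_sq (norm_nonneg _)).symm
  rw [h1, h, Real.sqrt_sq (Finset.prod_nonneg fun i _ => norm_nonneg _)]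

lemma tensT_inner {n d k : ℕ} (x : Fin n → EuclideanSpace ℝ (Fin d)) (z : Fin n → ℝ)
    (u : Fin k → EuclideanSpace ℝ (Fin d)) :
    ⟪tensAux u, ∑ c, z c • tensAux (fun _ : Fin k => x c)⟫
      = ∑ c, z c * ∏ i, ⟪u i, x c⟫ := by
  rw [inner_sum]
  refine Finset.sum_congr rfl fun c _ => ?_
  rw [real_inner_smul_right, inner_tensAux]

lemma T_norm_sq {n d k : ℕ} (x : Fin n → EuclideanSpace ℝ (Fin d)) (z : Fin n → ℝ) :
    ‖∑ c, z c • tensAux (fun _ : Fin k => x c)‖ ^ 2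
      = ∑ p, ∑ c, z p * z c * ⟪x p, x c⟫ ^ k := by
  rw [← real_inner_self_eq_norm_sq, sum_inner]
  refine Finset.sum_congr rfl fun p _ => ?_
  rw [real_inner_smul_left, tensT_inner, Finset.mul_sum]
  refine Finset.sum_congr rfl fun c _ => ?_
  rw [Finset.prod_const, Finset.card_univ, Fintype.card_fin]
  ring

lemma s_nonneg {n d : ℕ} (x : Fin n → EuclideanSpace ℝ (Fin d)) (z : Fin n → ℝ) (k : ℕ) :
    0 ≤ ∑ p, ∑ c, z p * z c * ⟪x p, x c⟫ ^ k := by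
  rw [← T_norm_sq x z]
  positivity

lemma CS_bound {n d k : ℕ} (x : Fin n → EuclideanSpace ℝ (Fin d)) (z : Fin n → ℝ)
    (u : Fin k → EuclideanSpace ℝ (Fin d)) :
    |∑ c, z c * ∏ i, ⟪u i, x c⟫|
      ≤ (∏ i, ‖u i‖) * Real.sqrt (∑ p, ∑ c, z p * z c * ⟪x p, x c⟫ ^ k) := by
  rw [← tensT_inner x z u]
  calc |⟪tensAux u, ∑ c, z c • tensAux (fun _ : Fin k => x c)⟫|
      ≤ ‖tensAux u‖ * ‖∑ c, z c • tensAux (fun _ : Fin k => x c)‖ :=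
        abs_real_inner_le_norm _ _
    _ = (∏ i, ‖u i‖) * Real.sqrt (∑ p, ∑ c, z p * z c * ⟪x p, x c⟫ ^ k) := by
        rw [norm_tensAux]
        congr 1
        rw [← T_norm_sq x z, Real.sqrt_sq (norm_nonneg _)]

lemma abs_tsum_le' {f : ℕ → ℝ} (h : Summable fun v => |f v|) :
    |∑' v, f v| ≤ ∑' v, |f v| := by
  have h' : Summable fun v => ‖f v‖ := by simpa [Real.norm_eq_abs] using h
  simpa [Real.norm_eq_abs] using norm_tsum_le_tsum_norm (f := f) h'

set_option maxHeartbeats 1000000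

/-- **Learning multivariate analytic functions (Theorem 1b, kernel-norm form).**
For unit-norm data and a slowly decaying power-series kernel with positive
definite Gram matrix `H`: if `y_c = ∑_k ∑_v a_{k,v} ∏ᵢ ⟪β_{k,v,i}, x_c⟫` with
auxiliary coefficients `ãₖ` satisfying `ã₀ < ∞` and `∑_k k ãₖ < ∞`, then
`√(yᵀ H⁻¹ y) ≤ g̃′(1) + g̃(0) = ∑' k, k ãₖ + ã₀`. -/
theorem stmt6 (n d : ℕ) (x : Fin n → EuclideanSpace ℝ (Fin d))
    (hx : ∀ a, ‖x a‖ = 1)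
    (b : ℕ → ℝ) (hb0 : 1 ≤ b 0) (hbk : ∀ k : ℕ, 1 ≤ k → 1 / (k : ℝ) ^ 2 ≤ b k)
    (hb_sum : Summable b)
    (H : Matrix (Fin n) (Fin n) ℝ)
    (hH : ∀ a c, H a c = ∑' k : ℕ, b k * ⟪x a, x c⟫ ^ k)
    (hHpd : H.PosDef)
    (a : ℕ → ℕ → ℝ) (β : (k : ℕ) → ℕ → Fin k → EuclideanSpace ℝ (Fin d))
    (haux : ∀ k : ℕ, Summable (fun v : ℕ => |a k v| * ∏ i : Fin k, ‖β k v i‖))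
    (hsum : Summable (fun k : ℕ => (k : ℝ) * auxCoef d a β k))
    (y : Fin n → ℝ)
    (hy : ∀ c, y c = ∑' k : ℕ, ∑' v : ℕ, a k v * ∏ i : Fin k, ⟪β k v i, x c⟫) :
    Real.sqrt (y ⬝ᵥ (H⁻¹ *ᵥ y)) ≤
      (∑' k : ℕ, (k : ℝ) * auxCoef d a β k) + auxCoef d a β 0 := by
  classical
  set At : ℕ → ℝ := auxCoef d a β with hAt
  set M : ℝ := (∑' k : ℕ, (k : ℝ) * At k) + At 0 with hM
  -- basic positivity facts
  have hann : ∀ k v, 0 ≤ |a k v| * ∏ i : Fin k, ‖β k v i‖ := fun k v =>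
    mul_nonneg (abs_nonneg _) (Finset.prod_nonneg fun i _ => norm_nonneg _)
  have hAtnn : ∀ k, 0 ≤ At k := fun k => tsum_nonneg fun v => hann k v
  have hkAtnn : ∀ k : ℕ, 0 ≤ (k : ℝ) * At k := fun k =>
    mul_nonneg (Nat.cast_nonneg k) (hAtnn k)
  have hMnn : 0 ≤ M := add_nonneg (tsum_nonneg hkAtnn) (hAtnn 0)
  -- summability of ã
  have hAt1 : Summable (fun k => At (k+1)) := by
    refine Summable.of_nonneg_of_le (fun k => hAtnn _) (fun k => ?_)
      ((summable_nat_add_iff 1).2 hsum)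
    have h1 : (1 : ℝ) ≤ ((k + 1 : ℕ) : ℝ) := by exact_mod_cast Nat.one_le_iff_ne_zero.2 (by omega)
    nlinarith [hAtnn (k + 1)]
  have hAts : Summable At := (summable_nat_add_iff 1).1 hAt1
  -- the weight function
  set w : ℕ → ℝ := fun k => max (k : ℝ) 1 with hw
  have hwnn : ∀ k, 0 ≤ w k := fun k => le_trans zero_le_one (le_max_right _ _)
  have hAtw : Summable (fun k => At k * w k) := by
    refine Summable.of_nonneg_of_le (fun k => mul_nonneg (hAtnn k) (hwnn k)) (fun k => ?_)
      (hAts.add hsum)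
    have hwk : w k ≤ (1 : ℝ) + k := by
      simp only [hw]
      refine max_le (by linarith [Nat.cast_nonneg (α := ℝ) k]) (by linarith [Nat.cast_nonneg (α := ℝ) k])
    nlinarith [hAtnn k, Nat.cast_nonneg (α := ℝ) k]
  have hAtwM : ∑' k, At k * w k = M := by
    rw [hM, Summable.tsum_eq_zero_add hAtw, Summable.tsum_eq_zero_add hsum]
    have h0 : w 0 = 1 := by simp [hw]
    have hk1 : ∀ k : ℕ, w (k + 1) = ((k + 1 : ℕ) : ℝ) := by
      intro k
      simp only [hw]
      exact max_eq_left (by exact_mod_cast Nat.one_le_iff_ne_zero.2 (by omega))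
    have : (∑' k : ℕ, At (k+1) * w (k + 1)) = ∑' k : ℕ, ((k + 1 : ℕ) : ℝ) * At (k+1) := by
      refine tsum_congr fun k => ?_
      rw [hk1 k, mul_comm]
    rw [h0, this]
    push_cast
    ring
  -- nonnegativity/bound facts about b
  have hbnn : ∀ k, 0 ≤ b k := by
    intro k
    match k with
    | 0 => linarith
    | (k + 1) =>
      have h := hbk (k + 1) (by omega)
      have : (0 : ℝ) < 1 / ((k + 1 : ℕ) : ℝ) ^ 2 := by positivity
      linarith
  have hp1 : ∀ p c : Fin n, |⟪x p, x c⟫| ≤ 1 := by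
    intro p c
    have h := abs_real_inner_le_norm (x p) (x c)
    rwa [hx p, hx c, one_mul] at h
  have hsumbk : ∀ p c : Fin n, Summable (fun k => b k * ⟪x p, x c⟫ ^ k) := by
    intro p c
    refine Summable.of_abs (Summable.of_nonneg_of_le (fun k => abs_nonneg _) (fun k => ?_) hb_sum)
    rw [abs_mul, abs_pow, abs_of_nonneg (hbnn k)]
    have hpow : |⟪x p, x c⟫| ^ k ≤ 1 := pow_le_one₀ (abs_nonneg _) (hp1 p c)
    nlinarith [hbnn k]
  -- the key quadratic form bound, for every vector z
  have key : ∀ z : Fin n → ℝ,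
      0 ≤ z ⬝ᵥ (H *ᵥ z) ∧ |z ⬝ᵥ y| ≤ M * Real.sqrt (z ⬝ᵥ (H *ᵥ z)) := by
    intro z
    set s : ℕ → ℝ := fun k => ∑ p, ∑ c, z p * z c * ⟪x p, x c⟫ ^ k with hs
    have hsnn : ∀ k, 0 ≤ s k := fun k => s_nonneg x z k
    set F : Fin n → Fin n → ℕ → ℝ :=
      fun p c k => (z p * z c) * (b k * ⟪x p, x c⟫ ^ k) with hF
    have hFs : ∀ p c, Summable (F p c) := fun p c => (hsumbk p c).mul_left _
    have hbs_eq : ∀ k, b k * s k = ∑ p, ∑ c, F p c k := by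
      intro k
      rw [hs, Finset.mul_sum]
      refine Finset.sum_congr rfl fun p _ => ?_
      rw [Finset.mul_sum]
      exact Finset.sum_congr rfl fun c _ => by simp only [hF]; ring
    have hbs_sum : Summable (fun k => b k * s k) := by
      have : Summable (fun k => ∑ p, ∑ c, F p c k) :=
        summable_sum fun p _ => summable_sum fun c _ => hFs p c
      exact this.congr fun k => (hbs_eq k).symm
    have hzHz : z ⬝ᵥ (H *ᵥ z) = ∑' k, b k * s k := by
      have e1 : ∑' k, b k * s k = ∑ p, ∑ c, ∑' k, F p c k := by
        rw [tsum_congr hbs_eq, Summable.tsum_finsetSum fun p _ => summable_sum fun c _ => hFs p c]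
        exact Finset.sum_congr rfl fun p _ => Summable.tsum_finsetSum fun c _ => hFs p c
      have e2 : ∀ p c : Fin n, ∑' k, F p c k = (z p * z c) * H p c := by
        intro p c
        rw [hH, ← tsum_mul_left]
      have hdp : z ⬝ᵥ (H *ᵥ z) = ∑ p, ∑ c, (z p * z c) * H p c := by
        simp only [dotProduct, mulVec, Finset.mul_sum]
        exact Finset.sum_congr rfl fun p _ => Finset.sum_congr rfl fun c _ => by ring
      rw [hdp, e1]
      exact Finset.sum_congr rfl fun p _ => Finset.sum_congr rfl fun c _ => (e2 p c).symm
    have hzHznn : 0 ≤ z ⬝ᵥ (H *ᵥ z) := by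
      rw [hzHz]
      exact tsum_nonneg fun k => mul_nonneg (hbnn k) (hsnn k)
    refine ⟨hzHznn, ?_⟩
    set P : ℝ := Real.sqrt (z ⬝ᵥ (H *ᵥ z)) with hP
    have hPnn : 0 ≤ P := Real.sqrt_nonneg _
    have hbs_le : ∀ k, b k * s k ≤ z ⬝ᵥ (H *ᵥ z) := by
      intro k
      rw [hzHz]
      exact Summable.le_tsum hbs_sum k fun j _ => mul_nonneg (hbnn j) (hsnn j)
    have hrk : ∀ k, Real.sqrt (s k) ≤ w k * P := by
      intro k
      have hsk : s k ≤ w k ^ 2 * (z ⬝ᵥ (H *ᵥ z)) := by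
        match k with
        | 0 =>
          have h := hbs_le 0
          have hw0 : w 0 = 1 := by simp [hw]
          rw [hw0]
          nlinarith [hsnn 0, hb0]
        | (k + 1) =>
          have h := hbs_le (k + 1)
          have hbk' := hbk (k + 1) (by omega)
          have hwk : w (k + 1) = ((k + 1 : ℕ) : ℝ) := by
            simp only [hw]
            exact max_eq_left (by exact_mod_cast Nat.one_le_iff_ne_zero.2 (by omega))
          rw [hwk]
          have hkpos : (0 : ℝ) < ((k + 1 : ℕ) : ℝ) ^ 2 := by positivity
          have h2 : (1 / ((k + 1 : ℕ) : ℝ) ^ 2) * s (k + 1) ≤ b (k + 1) * s (k + 1) :=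
            mul_le_mul_of_nonneg_right hbk' (hsnn (k + 1))
          rw [div_mul_eq_mul_div, one_mul, div_le_iff₀ hkpos] at h2
          nlinarith
      calc Real.sqrt (s k) ≤ Real.sqrt (w k ^ 2 * (z ⬝ᵥ (H *ᵥ z))) := Real.sqrt_le_sqrt hsk
        _ = w k * P := by
            rw [Real.sqrt_mul (sq_nonneg _), Real.sqrt_sq (hwnn k), hP]
    -- the series expansion of z ⬝ᵥ y
    set g : ℕ → ℕ → Fin n → ℝ :=
      fun k v c => a k v * ∏ i, ⟪β k v i, x c⟫ with hg
    set A : ℕ → ℕ → ℝ := fun k v => |a k v| * ∏ i : Fin k, ‖β k v i‖ with hA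
    have hgA : ∀ k v c, |g k v c| ≤ A k v := by
      intro k v c
      simp only [hg, hA, abs_mul]
      refine mul_le_mul_of_nonneg_left ?_ (abs_nonneg _)
      rw [Finset.abs_prod]
      refine Finset.prod_le_prod (fun i _ => abs_nonneg _) fun i _ => ?_
      have h := abs_real_inner_le_norm (β k v i) (x c)
      rwa [hx c, mul_one] at h
    have hg_sumv : ∀ k c, Summable (fun v => g k v c) := fun k c =>
      Summable.of_abs (Summable.of_nonneg_of_le (fun v => abs_nonneg _)
        (fun v => hgA k v c) (haux k))
    have hyc_term : ∀ k c, |∑' v, g k v c| ≤ At k := by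
      intro k c
      have h1 : Summable (fun v => |g k v c|) :=
        Summable.of_nonneg_of_le (fun v => abs_nonneg _) (fun v => hgA k v c) (haux k)
      calc |∑' v, g k v c| ≤ ∑' v, |g k v c| := abs_tsum_le' h1
        _ ≤ ∑' v, A k v := Summable.tsum_le_tsum (fun v => hgA k v c) h1 (haux k)
        _ = At k := rfl
    have hk_sum : ∀ c, Summable (fun k => ∑' v, g k v c) := fun c =>
      Summable.of_abs (Summable.of_nonneg_of_le (fun k => abs_nonneg _)
        (fun k => hyc_term k c) hAts)
    have hzy : z ⬝ᵥ y = ∑' k, ∑' v, a k v * (∑ c, z c * ∏ i, ⟪β k v i, x c⟫) := by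
      calc z ⬝ᵥ y = ∑ c, z c * ∑' k, ∑' v, g k v c := by
            simp only [dotProduct]
            exact Finset.sum_congr rfl fun c _ => by rw [hy c]
        _ = ∑ c, ∑' k, z c * ∑' v, g k v c :=
            Finset.sum_congr rfl fun c _ => (tsum_mul_left).symm
        _ = ∑' k, ∑ c, z c * ∑' v, g k v c :=
            (Summable.tsum_finsetSum fun c _ => (hk_sum c).mul_left (z c)).symm
        _ = ∑' k, ∑' v, a k v * (∑ c, z c * ∏ i, ⟪β k v i, x c⟫) := by
            refine tsum_congr fun k => ?_
            calc ∑ c, z c * ∑' v, g k v c = ∑ c, ∑' v, z c * g k v c := by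
                  exact Finset.sum_congr rfl fun c _ => (tsum_mul_left).symm
              _ = ∑' v, ∑ c, z c * g k v c :=
                  (Summable.tsum_finsetSum fun c _ => (hg_sumv k c).mul_left (z c)).symm
              _ = ∑' v, a k v * (∑ c, z c * ∏ i, ⟪β k v i, x c⟫) := by
                  refine tsum_congr fun v => ?_
                  rw [Finset.mul_sum]
                  exact Finset.sum_congr rfl fun c _ => by simp only [hg]; ring
    -- termwise bounds
    have hterm : ∀ k v, |a k v * (∑ c, z c * ∏ i, ⟪β k v i, x c⟫)| ≤ A k v * Real.sqrt (s k) := by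
      intro k v
      rw [abs_mul, hA, mul_assoc]
      exact mul_le_mul_of_nonneg_left (CS_bound x z (β k v)) (abs_nonneg _)
    have hsum_inner : ∀ k, Summable (fun v => a k v * (∑ c, z c * ∏ i, ⟪β k v i, x c⟫)) := by
      intro k
      refine Summable.of_abs (Summable.of_nonneg_of_le (fun v => abs_nonneg _)
        (fun v => hterm k v) ((haux k).mul_right _))
    have hinner_le : ∀ k, |∑' v, a k v * (∑ c, z c * ∏ i, ⟪β k v i, x c⟫)|
        ≤ At k * Real.sqrt (s k) := by
      intro k
      have h1 : Summable fun v => |a k v * (∑ c, z c * ∏ i, ⟪β k v i, x c⟫)| :=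
        Summable.of_nonneg_of_le (fun v => abs_nonneg _) (fun v => hterm k v)
          ((haux k).mul_right _)
      calc |∑' v, a k v * (∑ c, z c * ∏ i, ⟪β k v i, x c⟫)|
          ≤ ∑' v, |a k v * (∑ c, z c * ∏ i, ⟪β k v i, x c⟫)| := abs_tsum_le' h1
        _ ≤ ∑' v, A k v * Real.sqrt (s k) :=
            Summable.tsum_le_tsum (fun v => hterm k v) h1 ((haux k).mul_right _)
        _ = At k * Real.sqrt (s k) := tsum_mul_right
    have hRHS_sum : Summable (fun k => At k * Real.sqrt (s k)) := by
      refine Summable.of_nonneg_of_le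
        (fun k => mul_nonneg (hAtnn k) (Real.sqrt_nonneg _)) (fun k => ?_) (hAtw.mul_right P)
      calc At k * Real.sqrt (s k) ≤ At k * (w k * P) :=
            mul_le_mul_of_nonneg_left (hrk k) (hAtnn k)
        _ = At k * w k * P := by ring
    have hLHS_sum : Summable (fun k => |∑' v, a k v * (∑ c, z c * ∏ i, ⟪β k v i, x c⟫)|) :=
      Summable.of_nonneg_of_le (fun k => abs_nonneg _) (fun k => hinner_le k) hRHS_sum
    calc |z ⬝ᵥ y| = |∑' k, ∑' v, a k v * (∑ c, z c * ∏ i, ⟪β k v i, x c⟫)| := by rw [hzy]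
      _ ≤ ∑' k, |∑' v, a k v * (∑ c, z c * ∏ i, ⟪β k v i, x c⟫)| := abs_tsum_le' hLHS_sum
      _ ≤ ∑' k, At k * Real.sqrt (s k) := Summable.tsum_le_tsum (fun k => hinner_le k) hLHS_sum hRHS_sum
      _ ≤ ∑' k, At k * w k * P := by
          refine Summable.tsum_le_tsum (fun k => ?_) hRHS_sum (hAtw.mul_right P)
          calc At k * Real.sqrt (s k) ≤ At k * (w k * P) :=
                mul_le_mul_of_nonneg_left (hrk k) (hAtnn k)
            _ = At k * w k * P := by ring
      _ = (∑' k, At k * w k) * P := tsum_mul_right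
      _ = M * P := by rw [hAtwM]
  -- assemble
  have hdet : IsUnit H.det := isUnit_iff_ne_zero.2 (ne_of_gt hHpd.det_pos)
  set z : Fin n → ℝ := H⁻¹ *ᵥ y with hz
  have hHz : H *ᵥ z = y := by
    rw [hz, Matrix.mulVec_mulVec, Matrix.mul_nonsing_inv H hdet, Matrix.one_mulVec]
  set Q : ℝ := y ⬝ᵥ (H⁻¹ *ᵥ y) with hQ
  have hzy : z ⬝ᵥ y = Q := by rw [hQ, hz, dotProduct_comm]
  have hzHz : z ⬝ᵥ (H *ᵥ z) = Q := by rw [hHz, hzy]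
  obtain ⟨hQnn', hkey⟩ := key z
  rw [hzHz] at hQnn' hkey
  rw [hzy] at hkey
  have hQM : Q ≤ M * Real.sqrt Q := le_trans (le_abs_self Q) hkey
  rcases eq_or_lt_of_le hQnn' with h0 | hQpos
  · rw [← h0, Real.sqrt_zero]
    exact hMnn
  · have hsq : 0 < Real.sqrt Q := Real.sqrt_pos.2 hQpos
    nlinarith [Real.mul_self_sqrt hQnn', hQM, hsq]
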